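/- Let T be a range tree on a finite linearly ordered set of n keys (a balanced binary tree whose leaves are the keys in order, with S(v) the keys below node v). For any query interval [c,d] of keys there exists a set C of O(log n) nodes of T, no one an ancestor of another, such that the keys in [c,d] are exactly the disjoint union of S(v) over v∈C. More precisely, one can take C to consist of nodes hanging off the two root-to-leaf search paths to c and d, and |C| ≤ 2·height(T). -/
import Mathlib


/-- A range tree over real keys: a binary tree whose leaves hold the keys. -/
inductive KTree where
  | leaf : ℝ → KTree
  | node : KTree → KTree → KTree

/-- The set of keys stored at the leaves below a node. -/
noncomputable def KTree.keys : KTree → Finset ℝ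
  | .leaf x => {x}
  | .node l r => l.keys ∪ r.keys

/-- Height measured in levels (a single leaf has height 1). -/
def KTree.height : KTree → ℕ
  | .leaf _ => 1
  | .node l r => max l.height r.height + 1

/-- The search-tree property: at every internal node, all keys of the left
subtree precede all keys of the right subtree. -/
def KTree.IsBST : KTree → Prop
  | .leaf _ => True
  | .node l r => l.IsBST ∧ r.IsBST ∧ ∀ x ∈ l.keys, ∀ y ∈ r.keys, x < y

/-- `u` is a subtree of the given tree (a node of it, identified with the
subtree it roots). -/
def KTree.IsSubtree (u : KTree) : KTree → Prop
  | .leaf x => u = .leaf x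
  | .node l r => u = .node l r ∨ u.IsSubtree l ∨ u.IsSubtree r

open Classical in
noncomputable def KTree.decomp (c d : ℝ) : KTree → List KTree
  | .leaf x => if c ≤ x ∧ x ≤ d then [.leaf x] else []
  | .node l r =>
    if ∀ x ∈ (KTree.node l r).keys, c ≤ x ∧ x ≤ d then [.node l r]
    else (if ∃ x ∈ l.keys, c ≤ x ∧ x ≤ d then KTree.decomp c d l else []) ++
         (if ∃ x ∈ r.keys, c ≤ x ∧ x ≤ d then KTree.decomp c d r else [])

namespace KTree

lemma keys_nonempty (T : KTree) : T.keys.Nonempty := by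
  induction T with
  | leaf x => exact ⟨x, by simp [keys]⟩
  | node l r ihl ihr => exact ihl.mono (by simp [keys, Finset.subset_union_left])

lemma subtree_refl (T : KTree) : T.IsSubtree T := by
  cases T with
  | leaf x => rfl
  | node l r => exact Or.inl rfl

lemma subtree_keys_subset {u T : KTree} (h : u.IsSubtree T) : u.keys ⊆ T.keys := by
  induction T with
  | leaf x => cases h; rfl
  | node l r ihl ihr =>
    rcases h with h | h | h
    · cases h; rfl
    · exact (ihl h).trans (by simp [keys])
    · exact (ihr h).trans (by simp [keys, Finset.subset_union_right])

lemma mem_decomp_subtree {c d : ℝ} {T v : KTree} (h : v ∈ T.decomp c d) :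
    v.IsSubtree T := by
  induction T with
  | leaf x =>
    simp only [decomp] at h
    split at h
    · simp at h; subst h; exact subtree_refl _
    · simp at h
  | node l r ihl ihr =>
    simp only [decomp] at h
    split at h
    · simp at h; subst h; exact subtree_refl _
    · rw [List.mem_append] at h
      rcases h with h | h
      · split at h
        · exact Or.inr (Or.inl (ihl h))
        · simp at h
      · split at h
        · exact Or.inr (Or.inr (ihr h))
        · simp at h

lemma bst_disjoint {l r : KTree} (h : ∀ x ∈ l.keys, ∀ y ∈ r.keys, x < y) :
    Disjoint l.keys r.keys := by
  rw [Finset.disjoint_left]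
  intro a hal har
  exact absurd (h a hal a har) (lt_irrefl a)

lemma decomp_pairwise {c d : ℝ} {T : KTree} (hbst : T.IsBST) :
    (T.decomp c d).Pairwise (fun u v => Disjoint u.keys v.keys ∧
        ¬ u.IsSubtree v ∧ ¬ v.IsSubtree u) := by
  induction T with
  | leaf x =>
    simp only [decomp]; split <;> simp
  | node l r ihl ihr =>
    obtain ⟨hl, hr, hlr⟩ := hbst
    simp only [decomp]
    split
    · simp
    · rw [List.pairwise_append]
      have hdisj := bst_disjoint hlr
      refine ⟨?_, ?_, ?_⟩
      · split
        · exact ihl hl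
        · simp
      · split
        · exact ihr hr
        · simp
      · intro u hu v hv
        have hul : u.IsSubtree l := by
          split at hu
          · exact mem_decomp_subtree hu
          · simp at hu
        have hvr : v.IsSubtree r := by
          split at hv
          · exact mem_decomp_subtree hv
          · simp at hv
        have hus := subtree_keys_subset hul
        have hvs := subtree_keys_subset hvr
        have hd : Disjoint u.keys v.keys := hdisj.mono hus hvs
        refine ⟨hd, ?_, ?_⟩
        · intro hsub
          have := (subtree_keys_subset hsub).trans hvs
          obtain ⟨a, ha⟩ := u.keys_nonempty
          exact (Finset.disjoint_left.mp hdisj (hus ha) (this ha))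
        · intro hsub
          have := (subtree_keys_subset hsub).trans hus
          obtain ⟨a, ha⟩ := v.keys_nonempty
          exact (Finset.disjoint_left.mp hdisj (this ha) (hvs ha))

lemma foldr_append (L1 L2 : List KTree) :
    (L1 ++ L2).foldr (fun v s => v.keys ∪ s) ∅ =
      L1.foldr (fun v s => v.keys ∪ s) ∅ ∪ L2.foldr (fun v s => v.keys ∪ s) ∅ := by
  induction L1 with
  | nil => simp
  | cons a L ih => simp [ih, Finset.union_assoc]

lemma decomp_union (c d : ℝ) (T : KTree) :
    (T.decomp c d).foldr (fun v s => v.keys ∪ s) ∅ =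
      T.keys.filter (fun x => c ≤ x ∧ x ≤ d) := by
  induction T with
  | leaf x =>
    simp only [decomp]
    split
    · next h => simp [keys, Finset.filter_singleton, h]
    · next h => simp [keys, Finset.filter_singleton, h]
  | node l r ihl ihr =>
    simp only [decomp]
    split
    · next h => rw [Finset.filter_true_of_mem h]; simp
    · next h =>
      rw [foldr_append]
      have hk : (KTree.node l r).keys = l.keys ∪ r.keys := rfl
      rw [hk, Finset.filter_union]
      congr 1
      · split
        · exact ihl
        · next h2 =>
          push_neg at h2
          simp only [List.foldr_nil]
          symm
          rw [Finset.filter_eq_empty_iff]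
          intro x hx hc
          exact absurd hc.2 (not_le.mpr (h2 x hx hc.1))
      · split
        · exact ihr
        · next h2 =>
          push_neg at h2
          simp only [List.foldr_nil]
          symm
          rw [Finset.filter_eq_empty_iff]
          intro x hx hc
          exact absurd hc.2 (not_le.mpr (h2 x hx hc.1))

lemma height_pos (T : KTree) : 1 ≤ T.height := by
  cases T <;> simp [height]

/-- One-sided bound: if every key is `≤ d`, the decomposition has ≤ height nodes. -/
lemma decomp_length_le_of_le {c d : ℝ} {T : KTree} (hbst : T.IsBST)
    (hd : ∀ x ∈ T.keys, x ≤ d) :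
    (T.decomp c d).length ≤ T.height := by
  induction T with
  | leaf x =>
    simp only [decomp]; split <;> simp [height]
  | node l r ihl ihr =>
    obtain ⟨hl, hr, hlr⟩ := hbst
    simp only [decomp]
    split
    · simp [height]
    · rw [List.length_append]
      by_cases hrc : ∃ y ∈ r.keys, y < c
      · -- left side filter empty
        obtain ⟨y, hy, hyc⟩ := hrc
        have hlempty : ¬ ∃ x ∈ l.keys, c ≤ x ∧ x ≤ d := by
          rintro ⟨x, hx, hcx, _⟩
          exact absurd (hlr x hx y hy) (not_lt.mpr (hyc.le.trans hcx))
        rw [if_neg hlempty]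
        simp only [List.length_nil, Nat.zero_add]
        have : (if ∃ x ∈ r.keys, c ≤ x ∧ x ≤ d then r.decomp c d else []).length ≤ r.height := by
          split
          · exact ihr hr (fun x hx => hd x (by simp [keys, Finset.mem_union]; exact Or.inr hx))
          · simpa using r.height_pos
        calc _ ≤ r.height := this
          _ ≤ _ := by simp only [height]; omega
      · -- all r keys ≥ c, so r fully in range → contributes ≤ 1
        push_neg at hrc
        have hrfull : ∀ x ∈ r.keys, c ≤ x ∧ x ≤ d :=
          fun x hx => ⟨hrc x hx, hd x (by simp [keys, Finset.mem_union]; exact Or.inr hx)⟩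
        have hrlen : (if ∃ x ∈ r.keys, c ≤ x ∧ x ≤ d then r.decomp c d else []).length ≤ 1 := by
          split
          · cases r with
            | leaf y =>
              simp only [decomp]
              rw [if_pos (hrfull y (by simp [keys]))]
              simp
            | node a b =>
              simp only [decomp]
              rw [if_pos hrfull]
              simp
          · simp
        have hllen : (if ∃ x ∈ l.keys, c ≤ x ∧ x ≤ d then l.decomp c d else []).length ≤ l.height := by
          split
          · exact ihl hl (fun x hx => hd x (by simp [keys, Finset.mem_union]; exact Or.inl hx))
          · simpa using l.height_pos
        calc _ ≤ l.height + 1 := Nat.add_le_add hllen hrlen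
          _ ≤ _ := by simp only [height]; omega

/-- One-sided bound: if every key is `≥ c`, the decomposition has ≤ height nodes. -/
lemma decomp_length_le_of_ge {c d : ℝ} {T : KTree} (hbst : T.IsBST)
    (hc : ∀ x ∈ T.keys, c ≤ x) :
    (T.decomp c d).length ≤ T.height := by
  induction T with
  | leaf x =>
    simp only [decomp]; split <;> simp [height]
  | node l r ihl ihr =>
    obtain ⟨hl, hr, hlr⟩ := hbst
    simp only [decomp]
    split
    · simp [height]
    · rw [List.length_append]
      by_cases hld : ∃ y ∈ l.keys, d < y
      · obtain ⟨y, hy, hyd⟩ := hld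
        have hrempty : ¬ ∃ x ∈ r.keys, c ≤ x ∧ x ≤ d := by
          rintro ⟨x, hx, _, hxd⟩
          exact absurd (hlr y hy x hx) (not_lt.mpr (hxd.trans hyd.le))
        rw [if_neg hrempty]
        simp only [List.length_nil, Nat.add_zero]
        have : (if ∃ x ∈ l.keys, c ≤ x ∧ x ≤ d then l.decomp c d else []).length ≤ l.height := by
          split
          · exact ihl hl (fun x hx => hc x (by simp [keys, Finset.mem_union]; exact Or.inl hx))
          · simpa using l.height_pos
        calc _ ≤ l.height := this
          _ ≤ _ := by simp only [height]; omega
      · push_neg at hld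
        have hlfull : ∀ x ∈ l.keys, c ≤ x ∧ x ≤ d :=
          fun x hx => ⟨hc x (by simp [keys, Finset.mem_union]; exact Or.inl hx), hld x hx⟩
        have hllen : (if ∃ x ∈ l.keys, c ≤ x ∧ x ≤ d then l.decomp c d else []).length ≤ 1 := by
          split
          · cases l with
            | leaf y =>
              simp only [decomp]
              rw [if_pos (hlfull y (by simp [keys]))]
              simp
            | node a b =>
              simp only [decomp]
              rw [if_pos hlfull]
              simp
          · simp
        have hrlen : (if ∃ x ∈ r.keys, c ≤ x ∧ x ≤ d then r.decomp c d else []).length ≤ r.height := by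
          split
          · exact ihr hr (fun x hx => hc x (by simp [keys, Finset.mem_union]; exact Or.inr hx))
          · simpa using r.height_pos
        calc _ ≤ 1 + r.height := Nat.add_le_add hllen hrlen
          _ ≤ _ := by simp only [height]; omega

lemma decomp_length_le {c d : ℝ} {T : KTree} (hbst : T.IsBST) :
    (T.decomp c d).length ≤ 2 * T.height := by
  induction T with
  | leaf x =>
    simp only [decomp]; split <;> simp [height]
  | node l r ihl ihr =>
    obtain ⟨hl, hr, hlr⟩ := hbst
    simp only [decomp]
    split
    · simp [height]; omega
    · rw [List.length_append]
      by_cases hld : ∃ y ∈ l.keys, d < y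
      · obtain ⟨y, hy, hyd⟩ := hld
        have hrempty : ¬ ∃ x ∈ r.keys, c ≤ x ∧ x ≤ d := by
          rintro ⟨x, hx, _, hxd⟩
          exact absurd (hlr y hy x hx) (not_lt.mpr (hxd.trans hyd.le))
        rw [if_neg hrempty]
        have : (if ∃ x ∈ l.keys, c ≤ x ∧ x ≤ d then l.decomp c d else []).length ≤ 2 * l.height := by
          split
          · exact ihl hl
          · simp
        simp only [List.length_nil, Nat.add_zero]
        calc _ ≤ 2 * l.height := this
          _ ≤ _ := by simp only [height]; omega
      · by_cases hrc : ∃ y ∈ r.keys, y < c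
        · obtain ⟨y, hy, hyc⟩ := hrc
          have hlempty : ¬ ∃ x ∈ l.keys, c ≤ x ∧ x ≤ d := by
            rintro ⟨x, hx, hcx, _⟩
            exact absurd (hlr x hx y hy) (not_lt.mpr (hyc.le.trans hcx))
          rw [if_neg hlempty]
          have : (if ∃ x ∈ r.keys, c ≤ x ∧ x ≤ d then r.decomp c d else []).length ≤ 2 * r.height := by
            split
            · exact ihr hr
            · simp
          simp only [List.length_nil, Nat.zero_add]
          calc _ ≤ 2 * r.height := this
            _ ≤ _ := by simp only [height]; omega
        · push_neg at hld hrc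
          have hllen : (if ∃ x ∈ l.keys, c ≤ x ∧ x ≤ d then l.decomp c d else []).length ≤ l.height := by
            split
            · exact decomp_length_le_of_le hl hld
            · simpa using l.height_pos
          have hrlen : (if ∃ x ∈ r.keys, c ≤ x ∧ x ≤ d then r.decomp c d else []).length ≤ r.height := by
            split
            · exact decomp_length_le_of_ge hr hrc
            · simpa using r.height_pos
          calc _ ≤ l.height + r.height := Nat.add_le_add hllen hrlen
            _ ≤ _ := by simp only [height]; omega

end KTree

theorem stmt4 (T : KTree) (hbst : T.IsBST) (c d : ℝ) :
    ∃ C : List KTree,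
      (∀ v ∈ C, v.IsSubtree T) ∧
      C.Pairwise (fun u v => Disjoint u.keys v.keys ∧
        ¬ u.IsSubtree v ∧ ¬ v.IsSubtree u) ∧
      (C.foldr (fun v s => v.keys ∪ s) ∅) = T.keys.filter (fun x => c ≤ x ∧ x ≤ d) ∧
      C.length ≤ 2 * T.height := by
  refine ⟨T.decomp c d, fun v hv => KTree.mem_decomp_subtree hv,
    KTree.decomp_pairwise hbst, ?_, KTree.decomp_length_le hbst⟩
  rw [KTree.decomp_union]
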